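/- arXiv:2405.12626 — 2 statements merged into one kernel-verified Lean document; each statement's English description precedes it below -/
import Mathlib

section
/- Let Z be a Hausdorff topological space with no isolated points, let f_1,…,f_N be continuous self-maps of Z, and suppose there exists a weakly mixing continuous map g : Z → Z with g ∘ f_i = f_i ∘ g for i = 1,…,N. Then for all nonempty open sets U_0,…,U_N ⊆ Z and V_0,…,V_N ⊆ Z there exist nonempty open sets W_0,…,W_N ⊆ Z such that d-N(W_0; W_1,…,W_N) ⊆ d-N(U_0; U_1,…,U_N) ∩ d-N(V_0; V_1,…,V_N). Consequently, if f_1,…,f_N is disjoint transitive, then the family d-N_f of all subsets of ℕ containing some disjoint return set is a filter. -/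
/-- The disjoint return set `d-N(U₀; U₁,…,U_N)` of the tuple `f`. -/
def dRet {Z : Type*} {N : ℕ} (f : Fin N → Z → Z) (U0 : Set Z) (U : Fin N → Set Z) :
    Set ℕ :=
  {m | ∃ z ∈ U0, ∀ i, (f i)^[m] z ∈ U i}

/-- The tuple `f 1,…,f N` is disjoint transitive: every disjoint return set is nonempty. -/
def dTrans {Z : Type*} [TopologicalSpace Z] {N : ℕ} (f : Fin N → Z → Z) : Prop :=
  ∀ (U0 : Set Z) (U : Fin N → Set Z), IsOpen U0 → U0.Nonempty →
    (∀ i, IsOpen (U i)) → (∀ i, (U i).Nonempty) → (dRet f U0 U).Nonempty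

/-- The `r`-fold product map `g × ⋯ × g` on `Z^r`. -/
def prodPow {Z : Type*} (r : ℕ) (g : Z → Z) : (Fin r → Z) → (Fin r → Z) :=
  fun x j => g (x j)

/-- The tuple `f 1,…,f N` is disjoint weakly mixing of order `r`: the `N`-tuple of the
`r`-fold products `f i × ⋯ × f i` on `Z^r` is disjoint transitive. -/
def dWM {Z : Type*} [TopologicalSpace Z] {N : ℕ} (r : ℕ) (f : Fin N → Z → Z) : Prop :=
  dTrans (fun i => prodPow r (f i))

/-- The family `d-N_f` of all subsets of `ℕ` containing some disjoint return set. -/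
def dSupersets {Z : Type*} [TopologicalSpace Z] {N : ℕ} (f : Fin N → Z → Z) : Set (Set ℕ) :=
  {B | ∃ (U0 : Set Z) (U : Fin N → Set Z),
    IsOpen U0 ∧ U0.Nonempty ∧ (∀ i, IsOpen (U i)) ∧ (∀ i, (U i).Nonempty) ∧
    dRet f U0 U ⊆ B}

/-- `g` is weakly mixing: `g × g` is topologically transitive on `Z × Z`. -/
def wMix {Z : Type*} [TopologicalSpace Z] (g : Z → Z) : Prop :=
  ∀ W1 W2 : Set (Z × Z), IsOpen W1 → W1.Nonempty → IsOpen W2 → W2.Nonempty →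
    ∃ n : ℕ, ((Prod.map g g)^[n] '' W1 ∩ W2).Nonempty

section Aux

variable {Z : Type*} [TopologicalSpace Z]

/-- Weak mixing gives a simultaneous return time for two pairs of open sets. -/
lemma wm_two {g : Z → Z} (hgwm : wMix g) {A B C D : Set Z}
    (hA : IsOpen A) (hAne : A.Nonempty) (hB : IsOpen B) (hBne : B.Nonempty)
    (hC : IsOpen C) (hCne : C.Nonempty) (hD : IsOpen D) (hDne : D.Nonempty) :
    ∃ n : ℕ, (∃ x ∈ A, g^[n] x ∈ B) ∧ (∃ y ∈ C, g^[n] y ∈ D) := by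
  obtain ⟨n, p, hp⟩ := hgwm (A ×ˢ C) (B ×ˢ D) (hA.prod hC) (hAne.prod hCne)
    (hB.prod hD) (hBne.prod hDne)
  obtain ⟨⟨q, hq, rfl⟩, hpd⟩ := hp
  rw [Prod.map_iterate] at hpd
  exact ⟨n, ⟨q.1, hq.1, hpd.1⟩, ⟨q.2, hq.2, hpd.2⟩⟩

/-- Furstenberg's pair-reduction: two pairs of open sets can be replaced by one pair
whose return set is contained in both return sets. -/
lemma pair_reduce {g : Z → Z} (hg : Continuous g) (hgwm : wMix g) {A B C D : Set Z}
    (hA : IsOpen A) (hAne : A.Nonempty) (hB : IsOpen B) (hBne : B.Nonempty)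
    (hC : IsOpen C) (hCne : C.Nonempty) (hD : IsOpen D) (hDne : D.Nonempty) :
    ∃ A' B' : Set Z, IsOpen A' ∧ A'.Nonempty ∧ IsOpen B' ∧ B'.Nonempty ∧
      ∀ m : ℕ, (∃ x ∈ A', g^[m] x ∈ B') →
        ((∃ x ∈ A, g^[m] x ∈ B) ∧ (∃ x ∈ C, g^[m] x ∈ D)) := by
  obtain ⟨n, ⟨x, hxA, hxC⟩, ⟨y, hyB, hyD⟩⟩ :=
    wm_two hgwm hA hAne hC hCne hB hBne hD hDne
  refine ⟨A ∩ g^[n] ⁻¹' C, B ∩ g^[n] ⁻¹' D,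
    hA.inter (hC.preimage (hg.iterate n)), ⟨x, hxA, hxC⟩,
    hB.inter (hD.preimage (hg.iterate n)), ⟨y, hyB, hyD⟩, ?_⟩
  rintro m ⟨z, ⟨hzA, hzC⟩, hzB, hzD⟩
  refine ⟨⟨z, hzA, hzB⟩, ⟨g^[n] z, hzC, ?_⟩⟩
  have : g^[m] (g^[n] z) = g^[n] (g^[m] z) :=
    (Function.Commute.iterate_iterate_self g m n) z
  rw [this]
  exact hzD

/-- Iterated pair-reduction for finitely many pairs of open sets. -/
lemma multi_reduce {g : Z → Z} (hg : Continuous g) (hgwm : wMix g) :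
    ∀ (k : ℕ) (A B : Fin (k + 1) → Set Z),
    (∀ j, IsOpen (A j)) → (∀ j, (A j).Nonempty) →
    (∀ j, IsOpen (B j)) → (∀ j, (B j).Nonempty) →
    ∃ A' B' : Set Z, IsOpen A' ∧ A'.Nonempty ∧ IsOpen B' ∧ B'.Nonempty ∧
      ∀ m : ℕ, (∃ x ∈ A', g^[m] x ∈ B') → ∀ j, ∃ x ∈ A j, g^[m] x ∈ B j := by
  intro k
  induction k with
  | zero =>
    intro A B hAo hAne hBo hBne
    exact ⟨A 0, B 0, hAo 0, hAne 0, hBo 0, hBne 0, fun m hm j => by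
      have : j = 0 := Fin.fin_one_eq_zero j
      rw [this]; exact hm⟩
  | succ k ih =>
    intro A B hAo hAne hBo hBne
    obtain ⟨A', B', hA'o, hA'ne, hB'o, hB'ne, hprop⟩ :=
      ih (fun j => A j.castSucc) (fun j => B j.castSucc)
        (fun j => hAo _) (fun j => hAne _) (fun j => hBo _) (fun j => hBne _)
    obtain ⟨A'', B'', hA''o, hA''ne, hB''o, hB''ne, hprop2⟩ :=
      pair_reduce hg hgwm hA'o hA'ne hB'o hB'ne
        (hAo (Fin.last _)) (hAne (Fin.last _)) (hBo (Fin.last _)) (hBne (Fin.last _))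
    refine ⟨A'', B'', hA''o, hA''ne, hB''o, hB''ne, fun m hm j => ?_⟩
    obtain ⟨h1, h2⟩ := hprop2 m hm
    refine Fin.lastCases ?_ ?_ j
    · exact h2
    · intro i; exact hprop m h1 i

/-- Weak mixing gives a common return time for any finite family of pairs. -/
lemma multi_return {g : Z → Z} (hg : Continuous g) (hgwm : wMix g)
    (k : ℕ) (A B : Fin (k + 1) → Set Z)
    (hAo : ∀ j, IsOpen (A j)) (hAne : ∀ j, (A j).Nonempty)
    (hBo : ∀ j, IsOpen (B j)) (hBne : ∀ j, (B j).Nonempty) :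
    ∃ n : ℕ, ∀ j, ∃ x ∈ A j, g^[n] x ∈ B j := by
  obtain ⟨A', B', hA'o, hA'ne, hB'o, hB'ne, hprop⟩ :=
    multi_reduce hg hgwm k A B hAo hAne hBo hBne
  obtain ⟨n, hn, -⟩ := wm_two hgwm hA'o hA'ne hB'o hB'ne hA'o hA'ne hB'o hB'ne
  exact ⟨n, hprop n hn⟩

/-- Monotonicity of disjoint return sets. -/
lemma dRet_mono {N : ℕ} {f : Fin N → Z → Z} {U0 V0 : Set Z} {U V : Fin N → Set Z}
    (h0 : U0 ⊆ V0) (h : ∀ i, U i ⊆ V i) : dRet f U0 U ⊆ dRet f V0 V := by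
  rintro m ⟨z, hz, hi⟩
  exact ⟨z, h0 hz, fun i => h i (hi i)⟩

/-- If the tuple is disjoint transitive on a Hausdorff space without isolated points,
every disjoint return set is infinite. -/
lemma dRet_infinite [T2Space Z] (hiso : ∀ z : Z, ¬ IsOpen ({z} : Set Z))
    {N : ℕ} {f : Fin N → Z → Z} (hf : ∀ i, Continuous (f i)) (htr : dTrans f)
    (U0 : Set Z) (U : Fin N → Set Z) (hU0o : IsOpen U0) (hU0ne : U0.Nonempty)
    (hUo : ∀ i, IsOpen (U i)) (hUne : ∀ i, (U i).Nonempty) :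
    (dRet f U0 U).Infinite := by
  rcases Nat.eq_zero_or_pos N with hN | hN
  · -- N = 0 : the return set is all of ℕ
    subst hN
    have : dRet f U0 U = Set.univ := by
      ext m
      simp only [dRet, Set.mem_setOf_eq, Set.mem_univ, iff_true]
      obtain ⟨z, hz⟩ := hU0ne
      exact ⟨z, hz, fun i => i.elim0⟩
    rw [this]
    exact Set.infinite_univ
  · obtain ⟨i0⟩ : Nonempty (Fin N) := ⟨⟨0, hN⟩⟩
    -- Key: for every finite set F we can shrink the opens to avoid all returns in F.
    have key : ∀ F : Finset ℕ, ∃ (W0 : Set Z) (W : Fin N → Set Z),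
        IsOpen W0 ∧ W0.Nonempty ∧ (∀ i, IsOpen (W i)) ∧ (∀ i, (W i).Nonempty) ∧
        W0 ⊆ U0 ∧ (∀ i, W i ⊆ U i) ∧ ∀ m ∈ F, m ∉ dRet f W0 W := by
      intro F
      induction F using Finset.induction with
      | empty => exact ⟨U0, U, hU0o, hU0ne, hUo, hUne, subset_rfl, fun _ => subset_rfl,
          fun m hm => absurd hm (Finset.notMem_empty m)⟩
      | @insert m F hmF ihF =>
        obtain ⟨W0, W, hW0o, hW0ne, hWo, hWne, hW0s, hWs, havoid⟩ := ihF
        obtain ⟨a, ha⟩ := hW0ne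
        set p := (f i0)^[m] a with hp
        -- find b ∈ W i0 with b ≠ p
        have hb : ∃ b ∈ W i0, b ≠ p := by
          by_contra hcon
          push_neg at hcon
          have hsub : W i0 = {p} := by
            apply Set.eq_singleton_iff_nonempty_unique_mem.mpr
            exact ⟨hWne i0, hcon⟩
          exact hiso p (hsub ▸ hWo i0)
        obtain ⟨b, hbW, hbp⟩ := hb
        obtain ⟨O2, O1, hO2o, hO1o, hbO2, hpO1, hdisj⟩ := t2_separation hbp
        refine ⟨W0 ∩ (f i0)^[m] ⁻¹' O1,
          Function.update W i0 (W i0 ∩ O2), hW0o.inter (hO1o.preimage ((hf i0).iterate m)),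
          ⟨a, ha, hpO1⟩, ?_, ?_, (Set.inter_subset_left).trans hW0s, ?_, ?_⟩
        · intro i
          rcases eq_or_ne i i0 with rfl | hne
          · rw [Function.update_self]; exact (hWo i).inter hO2o
          · rw [Function.update_of_ne hne]; exact hWo i
        · intro i
          rcases eq_or_ne i i0 with rfl | hne
          · rw [Function.update_self]; exact ⟨b, hbW, hbO2⟩
          · rw [Function.update_of_ne hne]; exact hWne i
        · intro i
          rcases eq_or_ne i i0 with rfl | hne
          · rw [Function.update_self]; exact (Set.inter_subset_left).trans (hWs i)
          · rw [Function.update_of_ne hne]; exact hWs i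
        · intro m' hm'
          rcases Finset.mem_insert.mp hm' with rfl | hm'F
          · rintro ⟨z, ⟨hzW0, hzO1⟩, hzi⟩
            have := hzi i0
            rw [Function.update_self] at this
            exact Set.disjoint_left.mp hdisj.symm hzO1 this.2
          · intro hmem
            refine havoid m' hm'F ?_
            refine dRet_mono Set.inter_subset_left (fun i => ?_) hmem
            rcases eq_or_ne i i0 with rfl | hne
            · rw [Function.update_self]; exact Set.inter_subset_left
            · rw [Function.update_of_ne hne]
    -- conclude
    by_contra hfin
    rw [Set.not_infinite] at hfin
    obtain ⟨W0, W, hW0o, hW0ne, hWo, hWne, hW0s, hWs, havoid⟩ := key hfin.toFinset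
    obtain ⟨m, hm⟩ := htr W0 W hW0o hW0ne hWo hWne
    have hmU : m ∈ dRet f U0 U := dRet_mono hW0s hWs hm
    exact havoid m (hfin.mem_toFinset.mpr hmU) hm

end Aux

/-- Let `Z` be Hausdorff with no isolated points, `f 1,…,f N`
continuous self-maps commuting with a weakly mixing continuous map `g`.  Then any two
disjoint return sets of `f` contain a common disjoint return set; consequently, if
`f 1,…,f N` is disjoint transitive, then the family of all supersets of disjoint
return sets is a filter. -/
theorem stmt_6 {Z : Type*} [TopologicalSpace Z] [T2Space Z]
    (hiso : ∀ z : Z, ¬ IsOpen ({z} : Set Z))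
    {N : ℕ} (f : Fin N → Z → Z) (hf : ∀ i, Continuous (f i))
    (g : Z → Z) (hg : Continuous g) (hgwm : wMix g)
    (hcomm : ∀ i, g ∘ f i = f i ∘ g) :
    (∀ (U0 V0 : Set Z) (U V : Fin N → Set Z),
      IsOpen U0 → U0.Nonempty → IsOpen V0 → V0.Nonempty →
      (∀ i, IsOpen (U i)) → (∀ i, (U i).Nonempty) →
      (∀ i, IsOpen (V i)) → (∀ i, (V i).Nonempty) →
      ∃ (W0 : Set Z) (W : Fin N → Set Z),
        IsOpen W0 ∧ W0.Nonempty ∧ (∀ i, IsOpen (W i)) ∧ (∀ i, (W i).Nonempty) ∧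
        dRet f W0 W ⊆ dRet f U0 U ∩ dRet f V0 V)
    ∧ (dTrans f →
      ((∀ B ∈ dSupersets f, B.Infinite) ∧
        (∀ B C : Set ℕ, B ∈ dSupersets f → B ⊆ C → C ∈ dSupersets f) ∧
        (∀ B C : Set ℕ, B ∈ dSupersets f → C ∈ dSupersets f → B ∩ C ∈ dSupersets f))) := by
  have main : ∀ (U0 V0 : Set Z) (U V : Fin N → Set Z),
      IsOpen U0 → U0.Nonempty → IsOpen V0 → V0.Nonempty →
      (∀ i, IsOpen (U i)) → (∀ i, (U i).Nonempty) →
      (∀ i, IsOpen (V i)) → (∀ i, (V i).Nonempty) →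
      ∃ (W0 : Set Z) (W : Fin N → Set Z),
        IsOpen W0 ∧ W0.Nonempty ∧ (∀ i, IsOpen (W i)) ∧ (∀ i, (W i).Nonempty) ∧
        dRet f W0 W ⊆ dRet f U0 U ∩ dRet f V0 V := by
    intro U0 V0 U V hU0o hU0ne hV0o hV0ne hUo hUne hVo hVne
    obtain ⟨n, hn⟩ := multi_return hg hgwm N (Fin.cons U0 U) (Fin.cons V0 V)
      (Fin.cases hU0o hUo) (Fin.cases hU0ne hUne) (Fin.cases hV0o hVo) (Fin.cases hV0ne hVne)
    refine ⟨U0 ∩ g^[n] ⁻¹' V0, fun i => U i ∩ g^[n] ⁻¹' V i,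
      hU0o.inter (hV0o.preimage (hg.iterate n)), ?_,
      fun i => (hUo i).inter ((hVo i).preimage (hg.iterate n)), fun i => ?_, ?_⟩
    · obtain ⟨x, hx1, hx2⟩ := hn 0
      exact ⟨x, hx1, hx2⟩
    · obtain ⟨x, hx1, hx2⟩ := hn i.succ
      exact ⟨x, by simpa using hx1, by simpa using hx2⟩
    · rintro m ⟨z, ⟨hzU0, hzV0⟩, hzi⟩
      constructor
      · exact ⟨z, hzU0, fun i => (hzi i).1⟩
      · refine ⟨g^[n] z, hzV0, fun i => ?_⟩
        have hc : Function.Commute g (f i) := fun x => congrFun (hcomm i) x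
        have : (f i)^[m] (g^[n] z) = g^[n] ((f i)^[m] z) :=
          ((hc.iterate_iterate n m) z).symm
        rw [this]
        exact (hzi i).2
  refine ⟨main, fun htr => ⟨?_, ?_, ?_⟩⟩
  · rintro B ⟨U0, U, hU0o, hU0ne, hUo, hUne, hsub⟩
    exact (dRet_infinite hiso hf htr U0 U hU0o hU0ne hUo hUne).mono hsub
  · rintro B C ⟨U0, U, hU0o, hU0ne, hUo, hUne, hsub⟩ hBC
    exact ⟨U0, U, hU0o, hU0ne, hUo, hUne, hsub.trans hBC⟩
  · rintro B C ⟨U0, U, hU0o, hU0ne, hUo, hUne, hsubB⟩ ⟨V0, V, hV0o, hV0ne, hVo, hVne, hsubC⟩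
    obtain ⟨W0, W, hW0o, hW0ne, hWo, hWne, hsub⟩ :=
      main U0 V0 U V hU0o hU0ne hV0o hV0ne hUo hUne hVo hVne
    exact ⟨W0, W, hW0o, hW0ne, hWo, hWne,
      hsub.trans (Set.inter_subset_inter hsubB hsubC)⟩
end

section
/- Let Z be a Hausdorff topological space with no isolated points, let A be a Furstenberg family, let f_1,…,f_N be continuous self-maps of Z that are disjoint A-transitive, and suppose there exists a weakly mixing continuous map g : Z → Z with g ∘ f_i = f_i ∘ g for i = 1,…,N. Then for every r ∈ ℕ, the N-tuple of r-fold product maps f_1×…×f_1, …, f_N×…×f_N acting on Z^r is disjoint A-transitive. In particular, f_1,…,f_N are disjoint weakly mixing of every order. -/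
/-- The tuple `f 1,…,f N` is disjoint `𝒜`-transitive: every disjoint return set
belongs to `𝒜`. -/
def dATrans {Z : Type*} [TopologicalSpace Z] {N : ℕ} (𝒜 : Set (Set ℕ))
    (f : Fin N → Z → Z) : Prop :=
  ∀ (U0 : Set Z) (U : Fin N → Set Z), IsOpen U0 → U0.Nonempty →
    (∀ i, IsOpen (U i)) → (∀ i, (U i).Nonempty) → dRet f U0 U ∈ 𝒜

section aux
variable {Z : Type*} [TopologicalSpace Z] {g : Z → Z}

/-- from wMix: one common time for two pairs of opens. -/
lemma wmix_pair (hgwm : wMix g) {A B C D : Set Z} (hA : IsOpen A) (hAne : A.Nonempty)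
    (hB : IsOpen B) (hBne : B.Nonempty) (hC : IsOpen C) (hCne : C.Nonempty)
    (hD : IsOpen D) (hDne : D.Nonempty) :
    ∃ n, (∃ x ∈ A, g^[n] x ∈ C) ∧ (∃ y ∈ B, g^[n] y ∈ D) := by
  obtain ⟨n, p, ⟨q, hq, hpq⟩, hp2⟩ :=
    hgwm (A ×ˢ B) (C ×ˢ D) (hA.prod hB) (hAne.prod hBne) (hC.prod hD) (hCne.prod hDne)
  have him : (Prod.map g g)^[n] q = (g^[n] q.1, g^[n] q.2) := by
    rw [Prod.map_iterate]; rfl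
  subst hpq
  rw [him] at hp2
  exact ⟨n, ⟨q.1, hq.1, hp2.1⟩, ⟨q.2, hq.2, hp2.2⟩⟩

/-- Furstenberg: weak mixing gives a common time for any finite list of pairs. -/
lemma wmix_multi (hg : Continuous g) (hgwm : wMix g) :
    ∀ (l : List (Set Z × Set Z)) (p : Set Z × Set Z),
      (∀ q ∈ p :: l, IsOpen q.1 ∧ q.1.Nonempty ∧ IsOpen q.2 ∧ q.2.Nonempty) →
      ∃ n, ∀ q ∈ p :: l, ∃ x ∈ q.1, g^[n] x ∈ q.2 := by
  intro l
  induction l with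
  | nil =>
    intro p h
    obtain ⟨h1, h2, h3, h4⟩ := h p (by simp)
    obtain ⟨n, hn, -⟩ := wmix_pair hgwm h1 h2 h1 h2 h3 h4 h3 h4
    exact ⟨n, by simpa using hn⟩
  | cons q t ih =>
    intro p h
    obtain ⟨hp1, hp2, hp3, hp4⟩ := h p (by simp)
    obtain ⟨hq1, hq2, hq3, hq4⟩ := h q (by simp)
    obtain ⟨n, ⟨a, ha1, ha2⟩, ⟨b, hb1, hb2⟩⟩ :=
      wmix_pair hgwm hq1 hq2 hq3 hq4 hp1 hp2 hp3 hp4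
    set q' : Set Z × Set Z := (q.1 ∩ g^[n] ⁻¹' p.1, q.2 ∩ g^[n] ⁻¹' p.2) with hq'
    have hcond : ∀ s ∈ q' :: t, IsOpen s.1 ∧ s.1.Nonempty ∧ IsOpen s.2 ∧ s.2.Nonempty := by
      intro s hs
      rcases List.mem_cons.1 hs with rfl | hs
      · exact ⟨hq1.inter ((hg.iterate n).isOpen_preimage _ hp1), ⟨a, ha1, ha2⟩,
          hq3.inter ((hg.iterate n).isOpen_preimage _ hp3), ⟨b, hb1, hb2⟩⟩
      · exact h s (by simp [hs])
    obtain ⟨m, hm⟩ := ih q' hcond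
    refine ⟨m, ?_⟩
    intro s hs
    rcases List.mem_cons.1 hs with rfl | hs
    · -- solve for p using the q' solution
      obtain ⟨x, ⟨hx1, hx2⟩, hy1, hy2⟩ := hm q' (by simp)
      refine ⟨g^[n] x, hx2, ?_⟩
      have : g^[m] (g^[n] x) = g^[n] (g^[m] x) := by
        rw [← Function.iterate_add_apply, ← Function.iterate_add_apply, Nat.add_comm]
      rw [this]; exact hy2
    rcases List.mem_cons.1 hs with rfl | hs
    · obtain ⟨x, ⟨hx1, hx2⟩, hy1, hy2⟩ := hm q' (by simp)
      exact ⟨x, hx1, hy1⟩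
    · exact hm s (by simp [hs])

/-- shrinking lemma: common opens `V0, V i` and times `n j` mapping into targets. -/
lemma shrink [Nonempty Z] (hg : Continuous g) (hgwm : wMix g) {N : ℕ} :
    ∀ (r : ℕ) (T0 : Fin r → Set Z) (T : Fin r → Fin N → Set Z),
      (∀ j, IsOpen (T0 j)) → (∀ j, (T0 j).Nonempty) →
      (∀ j i, IsOpen (T j i)) → (∀ j i, (T j i).Nonempty) →
      ∃ (n : Fin r → ℕ) (V0 : Set Z) (V : Fin N → Set Z),
        IsOpen V0 ∧ V0.Nonempty ∧ (∀ i, IsOpen (V i)) ∧ (∀ i, (V i).Nonempty) ∧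
        (∀ j, ∀ x ∈ V0, g^[n j] x ∈ T0 j) ∧
        (∀ j i, ∀ x ∈ V i, g^[n j] x ∈ T j i) := by
  intro r
  induction r with
  | zero =>
    intro T0 T _ _ _ _
    exact ⟨Fin.elim0, Set.univ, fun _ => Set.univ, isOpen_univ, Set.univ_nonempty,
      fun _ => isOpen_univ, fun _ => Set.univ_nonempty,
      fun j => j.elim0, fun j => j.elim0⟩
  | succ r ih =>
    intro T0 T h1 h2 h3 h4
    obtain ⟨n, V0, V, hV0o, hV0ne, hVo, hVne, hP0, hP⟩ :=
      ih (fun j => T0 j.succ) (fun j => T j.succ) (fun j => h1 j.succ) (fun j => h2 j.succ)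
        (fun j => h3 j.succ) (fun j => h4 j.succ)
    have hcondL : ∀ s ∈ ((V0, T0 0) :: List.ofFn fun i => (V i, T 0 i)),
        IsOpen s.1 ∧ s.1.Nonempty ∧ IsOpen s.2 ∧ s.2.Nonempty := by
      intro s hs
      rcases List.mem_cons.1 hs with rfl | hs
      · exact ⟨hV0o, hV0ne, h1 0, h2 0⟩
      · obtain ⟨i, rfl⟩ := List.mem_ofFn.1 hs
        exact ⟨hVo i, hVne i, h3 0 i, h4 0 i⟩
    obtain ⟨n0, hn0⟩ := wmix_multi hg hgwm (List.ofFn fun i => (V i, T 0 i)) (V0, T0 0) hcondL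
    · set V0' := V0 ∩ g^[n0] ⁻¹' T0 0 with hV0'
      set V' : Fin N → Set Z := fun i => V i ∩ g^[n0] ⁻¹' T 0 i with hV'
      have hV0'ne : V0'.Nonempty := by
        obtain ⟨x, hx1, hx2⟩ := hn0 (V0, T0 0) (by simp)
        exact ⟨x, hx1, hx2⟩
      have hV'ne : ∀ i, (V' i).Nonempty := by
        intro i
        obtain ⟨x, hx1, hx2⟩ := hn0 (V i, T 0 i)
          (List.mem_cons.2 (Or.inr (List.mem_ofFn.2 ⟨i, rfl⟩)))
        exact ⟨x, hx1, hx2⟩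
      refine ⟨Fin.cons n0 n, V0', V',
        hV0o.inter ((hg.iterate n0).isOpen_preimage _ (h1 0)), hV0'ne,
        fun i => (hVo i).inter ((hg.iterate n0).isOpen_preimage _ (h3 0 i)), hV'ne,
        ?_, ?_⟩
      · intro j x hx
        rcases Fin.eq_zero_or_eq_succ j with rfl | ⟨j', rfl⟩
        · simpa only [Fin.cons_zero, Set.mem_preimage] using hx.2
        · simpa only [Fin.cons_succ] using hP0 j' x hx.1
      · intro j i x hx
        rcases Fin.eq_zero_or_eq_succ j with rfl | ⟨j', rfl⟩
        · simpa only [Fin.cons_zero, Set.mem_preimage] using hx.2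
        · simpa only [Fin.cons_succ] using hP j' i x hx.1

/-- extract an open box around a point of an open set in `Fin r → Z`. -/
lemma box {r : ℕ} {U : Set (Fin r → Z)} (hU : IsOpen U) {x : Fin r → Z} (hx : x ∈ U) :
    ∃ B : Fin r → Set Z, (∀ j, IsOpen (B j)) ∧ (∀ j, x j ∈ B j) ∧
      Set.univ.pi B ⊆ U := by
  obtain ⟨I, u, hIu, hsub⟩ := isOpen_pi_iff.1 hU x hx
  refine ⟨fun j => if j ∈ I then u j else Set.univ, ?_, ?_, ?_⟩
  · intro j; by_cases hj : j ∈ I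
    · simpa [hj] using (hIu j hj).1
    · simp [hj]
  · intro j; by_cases hj : j ∈ I
    · simpa [hj] using (hIu j hj).2
    · simp [hj]
  · intro y hy
    apply hsub
    intro a ha
    have := hy a (Set.mem_univ a)
    rw [Finset.mem_coe] at ha
    simpa [ha] using this

lemma prodPow_iterate {r : ℕ} (h : Z → Z) (m : ℕ) (x : Fin r → Z) (j : Fin r) :
    (prodPow r h)^[m] x j = h^[m] (x j) := by
  induction m generalizing x with
  | zero => rfl
  | succ m ihm =>
    rw [Function.iterate_succ_apply, Function.iterate_succ_apply]
    exact ihm _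

end aux

/-- Let `Z` be Hausdorff with no isolated points, `𝒜` a Furstenberg
family, and `f 1,…,f N` continuous, disjoint `𝒜`-transitive self-maps commuting with a
weakly mixing continuous map `g`.  Then for every `r`, the `N`-tuple of `r`-fold
product maps on `Z^r` is disjoint `𝒜`-transitive; in particular `f 1,…,f N` are
disjoint weakly mixing of every order. -/
theorem stmt_7 {Z : Type*} [TopologicalSpace Z] [T2Space Z]
    (hiso : ∀ z : Z, ¬ IsOpen ({z} : Set Z))
    (𝒜 : Set (Set ℕ))
    (hInf : ∀ A ∈ 𝒜, A.Infinite)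
    (hUp : ∀ A B : Set ℕ, A ∈ 𝒜 → A ⊆ B → B ∈ 𝒜)
    {N : ℕ} (f : Fin N → Z → Z) (hf : ∀ i, Continuous (f i))
    (hA : dATrans 𝒜 f)
    (g : Z → Z) (hg : Continuous g) (hgwm : wMix g)
    (hcomm : ∀ i, g ∘ f i = f i ∘ g) :
    ∀ r : ℕ, 1 ≤ r → dATrans 𝒜 (fun i => prodPow r (f i)) ∧ dWM r f := by
  have hcomm' : ∀ i (m n : ℕ) (x : Z), g^[n] ((f i)^[m] x) = (f i)^[m] (g^[n] x) := by
    intro i m n x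
    have hc : Function.Commute g (f i) := fun y => congrFun (hcomm i) y
    exact ((hc.iterate_left n).iterate_right m) x
  intro r hr
  have key : dATrans 𝒜 (fun i => prodPow r (f i)) := by
    intro U0 U hU0o hU0ne hUo hUne
    obtain ⟨x0, hx0⟩ := hU0ne
    have hZ : Nonempty Z := ⟨x0 ⟨0, hr⟩⟩
    obtain ⟨B0, hB0o, hB0mem, hB0sub⟩ := box hU0o hx0
    have hBex : ∀ i, ∃ B : Fin r → Set Z, (∀ j, IsOpen (B j)) ∧ (∀ j, (B j).Nonempty) ∧
        Set.univ.pi B ⊆ U i := by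
      intro i
      obtain ⟨xi, hxi⟩ := hUne i
      obtain ⟨B, hBo, hBmem, hBsub⟩ := box (hUo i) hxi
      exact ⟨B, hBo, fun j => ⟨xi j, hBmem j⟩, hBsub⟩
    choose B hBo hBne hBsub using hBex
    obtain ⟨n, V0, V, hV0o, hV0ne, hVo, hVne, hP0, hP⟩ :=
      shrink hg hgwm r B0 (fun j i => B i j) hB0o (fun j => ⟨x0 j, hB0mem j⟩)
        (fun j i => hBo i j) (fun j i => hBne i j)
    refine hUp _ _ (hA V0 V hV0o hV0ne hVo hVne) ?_
    intro m hm
    obtain ⟨z, hz, hfz⟩ := hm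
    refine ⟨fun j => g^[n j] z, ?_, ?_⟩
    · apply hB0sub
      intro j _
      exact hP0 j z hz
    · intro i
      apply hBsub i
      intro j _
      show (prodPow r (f i))^[m] (fun j => g^[n j] z) j ∈ B i j
      rw [prodPow_iterate]
      show (f i)^[m] (g^[n j] z) ∈ B i j
      rw [← hcomm' i m (n j)]
      exact hP j i _ (hfz i)
  refine ⟨key, ?_⟩
  intro U0 U hU0o hU0ne hUo hUne
  exact (hInf _ (key U0 U hU0o hU0ne hUo hUne)).nonempty
end
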